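/- If C is a clique in a graph G and C' ⊆ C is avg-c-isolated (i.e., the sum over v in C' of the number of edges from v to vertices outside C' is strictly less than c·|C'|), then |C'| > δ(C) − c + 1, where δ(C) is the minimum degree in G over vertices of C. -/

import Mathlib

open Finset
open scoped Classical

variable {V : Type*} [Fintype V] [DecidableEq V]

/-- Number of neighbors of `v` in `G` lying outside `A`. -/
noncomputable def outdeg (G : SimpleGraph V) (v : V) (A : Finset V) : ℕ :=
  (Finset.univ.filter fun u => G.Adj v u ∧ u ∉ A).card

/-- Degree of `v` in `G`. -/
noncomputable def deg (G : SimpleGraph V) (v : V) : ℕ :=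
  (Finset.univ.filter fun u => G.Adj v u).card

/-- Minimum degree over the vertices of a nonempty set `C`. -/
noncomputable def minDeg (G : SimpleGraph V) (C : Finset V) (hC : C.Nonempty) : ℕ :=
  C.inf' hC fun v => deg G v

/-- Edge-wise intersection of the layers `G a, …, G b`. -/
def interGraph (G : ℕ → SimpleGraph V) (a b : ℕ) : SimpleGraph V where
  Adj u v := u ≠ v ∧ ∀ i ∈ Finset.Icc a b, (G i).Adj u v
  symm := ⟨fun u v h => ⟨h.1.symm, fun i hi => (h.2 i hi).symm⟩⟩
  loopless := ⟨fun v h => h.1 rfl⟩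

/-- Edge-wise union of the layers `G a, …, G b`. -/
def unionGraph (G : ℕ → SimpleGraph V) (a b : ℕ) : SimpleGraph V where
  Adj u v := ∃ i ∈ Finset.Icc a b, (G i).Adj u v
  symm := ⟨fun u v h => ⟨h.choose, h.choose_spec.1, h.choose_spec.2.symm⟩⟩
  loopless := ⟨fun v h => (G h.choose).loopless.irrefl v h.choose_spec.2⟩
theorem stmt0 (G : SimpleGraph V) (c : ℚ) (hc : 0 < c)
    (C C' : Finset V) (hC : C.Nonempty)
    (hclique : G.IsClique (C : Set V)) (hsub : C' ⊆ C)
    (hiso : (∑ v ∈ C', (outdeg G v C' : ℚ)) < c * C'.card) :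
    (C'.card : ℚ) > (minDeg G C hC : ℚ) - c + 1 := by

  -- C' is nonempty
  have hne : C'.Nonempty := by
    rcases C'.eq_empty_or_nonempty with h | h
    · exfalso; rw [h] at hiso; simp at hiso
    · exact h
  -- average argument: some v ∈ C' has outdeg < c
  have hex : ∃ v ∈ C', (outdeg G v C' : ℚ) < c := by
    by_contra h
    push_neg at h
    have : c * C'.card ≤ ∑ v ∈ C', (outdeg G v C' : ℚ) := by
      calc c * C'.card = ∑ _v ∈ C', c := by rw [Finset.sum_const]; ring
        _ ≤ _ := Finset.sum_le_sum fun v hv => h v hv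
    exact absurd hiso this.not_gt
  obtain ⟨v, hv, hvlt⟩ := hex
  -- degree split
  have hdeg : deg G v ≤ C'.card - 1 + outdeg G v C' := by
    have hsplit : (Finset.univ.filter fun u => G.Adj v u) =
        (Finset.univ.filter fun u => G.Adj v u ∧ u ∈ C') ∪
        (Finset.univ.filter fun u => G.Adj v u ∧ u ∉ C') := by
      ext u; by_cases hu : u ∈ C' <;> simp [hu]
    have hdisj : Disjoint (Finset.univ.filter fun u => G.Adj v u ∧ u ∈ C')
        (Finset.univ.filter fun u => G.Adj v u ∧ u ∉ C') := by
      simp [Finset.disjoint_left]; tauto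
    have h1 : (Finset.univ.filter fun u => G.Adj v u ∧ u ∈ C').card ≤ C'.card - 1 := by
      have hsubs : (Finset.univ.filter fun u => G.Adj v u ∧ u ∈ C') ⊆ C'.erase v := by
        intro u hu
        simp only [Finset.mem_filter] at hu
        exact Finset.mem_erase.2 ⟨fun h => G.loopless.irrefl v (h ▸ hu.2.1), hu.2.2⟩
      calc _ ≤ (C'.erase v).card := Finset.card_le_card hsubs
        _ ≤ C'.card - 1 := le_of_eq (Finset.card_erase_of_mem hv)
    calc deg G v = (Finset.univ.filter fun u => G.Adj v u ∧ u ∈ C').card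
          + (Finset.univ.filter fun u => G.Adj v u ∧ u ∉ C').card := by
          rw [deg, hsplit, Finset.card_union_of_disjoint hdisj]
      _ ≤ C'.card - 1 + outdeg G v C' := by
          exact Nat.add_le_add h1 le_rfl
  have hmin : minDeg G C hC ≤ deg G v := Finset.inf'_le _ (hsub hv)
  have hcard : 1 ≤ C'.card := Finset.card_pos.2 hne
  have hQ : (deg G v : ℚ) ≤ (C'.card : ℚ) - 1 + (outdeg G v C' : ℚ) := by
    have h' := (Nat.cast_le (α := ℚ)).2 hdeg
    push_cast [Nat.cast_sub hcard] at h'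
    linarith
  have hminQ : (minDeg G C hC : ℚ) ≤ (deg G v : ℚ) := by exact_mod_cast hmin
  linarith
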